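/- Taking q-superdimensions in the decomposition R^{j₁} ⊗ R^{j₂} = ⊕ R^j is consistent: for q = e^{2πi/N}, the product sqdim(R^{j₁})·sqdim(R^{j₂}) of q-superdimensions equals the sum Σ_{|j₁−j₂| ≤ j ≤ j₁+j₂} sqdim(R^j) over half-integer steps, where sqdim(R^j) = (−1)^{2j}(q^{2j+1}+q^{−2j})/(q+1), provided all spins involved are below the cutoff. -/

import Mathlib

/-- The q-superdimension of the `U_q(osp(1|2))` representation `R^j` in twice-spin
convention (`n = 2j`): `sqdim(R^j) = (-1)^{2j} (q^{2j+1} + q^{-2j})/(q+1)`. -/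
noncomputable def sqdimQ (q : ℂ) (n : ℕ) : ℂ :=
  (-1 : ℂ) ^ n * (q ^ (n + 1) + q⁻¹ ^ n) / (q + 1)

lemma sqdimQ_eq (q : ℂ) (hq0 : q ≠ 0) (n : ℕ) :
    sqdimQ q n = (-1 : ℂ) ^ n * (q ^ (2 * n + 1) + 1) / (q ^ n * (q + 1)) := by
  have hqn : (q : ℂ) ^ n ≠ 0 := pow_ne_zero n hq0
  rw [sqdimQ, inv_pow]
  field_simp
  ring

lemma sqdimQ_zero (q : ℂ) (hq1 : q + 1 ≠ 0) : sqdimQ q 0 = 1 := by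
  simp only [sqdimQ, pow_zero, one_mul, pow_one]
  field_simp
  ring

lemma sqdim_key (q : ℂ) (hq0 : q ≠ 0) (hq1 : q + 1 ≠ 0) (a c : ℕ) :
    sqdimQ q (a + 1) * sqdimQ q (a + 1 + c) =
      sqdimQ q c + sqdimQ q a * sqdimQ q (a + (c + 1)) + sqdimQ q (c + (2 * a + 2)) := by
  have hX : (q : ℂ) ^ a ≠ 0 := pow_ne_zero _ hq0
  have hY : (q : ℂ) ^ c ≠ 0 := pow_ne_zero _ hq0
  simp only [sqdimQ_eq q hq0,
    show 2 * (a + 1) + 1 = a * 2 + 3 from by ring,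
    show 2 * (a + 1 + c) + 1 = a * 2 + (c * 2 + 3) from by ring,
    show 2 * c + 1 = c * 2 + 1 from by ring,
    show 2 * a + 1 = a * 2 + 1 from by ring,
    show 2 * (a + (c + 1)) + 1 = a * 2 + (c * 2 + 3) from by ring,
    show 2 * (c + (2 * a + 2)) + 1 = a * 2 + (a * 2 + (c * 2 + 5)) from by ring,
    show c + (2 * a + 2) = a * 2 + (c + 2) from by ring,
    show a + 1 + c = a + (c + 1) from by ring]
  simp only [pow_add, pow_mul, pow_one, neg_one_sq, one_pow]
  simp only [div_mul_div_comm]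
  rw [div_add_div _ _ (by simp [hq0, hq1, hX, hY, mul_eq_zero])
       (by simp [hq0, hq1, hX, hY, mul_eq_zero]),
     div_add_div _ _ (by simp [hq0, hq1, hX, hY, mul_eq_zero])
       (by simp [hq0, hq1, hX, hY, mul_eq_zero]),
     div_eq_div_iff (by simp [hq0, hq1, hX, hY, mul_eq_zero])
       (by simp [hq0, hq1, hX, hY, mul_eq_zero])]
  ring_nf
  simp only [show ∀ n : ℕ, ((-1 : ℂ)) ^ (n * 2) = 1 from fun n => by
      rw [pow_mul', neg_one_sq, one_pow],
    show ∀ n : ℕ, ((-1 : ℂ)) ^ (n * 4) = 1 from fun n => by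
      rw [show n * 4 = n * 2 * 2 from by ring, pow_mul, pow_mul', neg_one_sq, one_pow, one_pow],
    one_mul, mul_one]
  ring

lemma sqdim_sum (q : ℂ) (hq0 : q ≠ 0) (hq1 : q + 1 ≠ 0) (a c : ℕ) :
    sqdimQ q a * sqdimQ q (a + c) = ∑ j ∈ Finset.range (2 * a + 1), sqdimQ q (c + j) := by
  induction a generalizing c with
  | zero => simp [sqdimQ_zero q hq1]
  | succ a ih =>
      have h1 : 2 * (a + 1) + 1 = (2 * a + 2) + 1 := by ring
      rw [h1, Finset.sum_range_succ, Finset.sum_range_succ']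
      have h2 : ∑ j ∈ Finset.range (2 * a + 1), sqdimQ q (c + (j + 1)) =
          sqdimQ q a * sqdimQ q (a + (c + 1)) := by
        rw [ih (c + 1)]
        exact Finset.sum_congr rfl fun j _ => by rw [Nat.add_assoc, Nat.add_comm 1 j]
      rw [h2]
      calc sqdimQ q (a + 1) * sqdimQ q (a + 1 + c)
          = sqdimQ q c + sqdimQ q a * sqdimQ q (a + (c + 1)) + sqdimQ q (c + (2 * a + 2)) :=
            sqdim_key q hq0 hq1 a c
        _ = _ := by ring

/-- multiplicativity of the q-superdimension under the osp(1|2) fusion rule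
`R^{j₁} ⊗ R^{j₂} = ⊕_{|j₁-j₂| ≤ j ≤ j₁+j₂} R^j` (half-integer steps), as a
rational-function identity in `q ≠ 0`, `q ≠ -1`. -/
theorem sqdim_multiplicative (q : ℂ) (hq0 : q ≠ 0) (hq1 : q ≠ -1) (a b : ℕ) :
    sqdimQ q a * sqdimQ q b =
      ∑ i ∈ Finset.range (2 * min a b + 1), sqdimQ q (a + b - i) := by
  have hq1' : q + 1 ≠ 0 := fun h => hq1 (by linear_combination h)
  have main : ∀ a c : ℕ, sqdimQ q a * sqdimQ q (a + c) =
      ∑ i ∈ Finset.range (2 * min a (a + c) + 1), sqdimQ q (a + (a + c) - i) := by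
    intro a c
    have hmin : min a (a + c) = a := min_eq_left (Nat.le_add_right a c)
    rw [hmin, sqdim_sum q hq0 hq1' a c]
    rw [← Finset.sum_range_reflect (fun j => sqdimQ q (c + j)) (2 * a + 1)]
    exact Finset.sum_congr rfl fun i hi => by
      simp only [Finset.mem_range] at hi
      congr 1
      omega
  rcases le_total a b with h | h
  · obtain ⟨c, rfl⟩ := Nat.exists_eq_add_of_le h
    exact main a c
  · obtain ⟨c, rfl⟩ := Nat.exists_eq_add_of_le h
    rw [mul_comm, main b c, min_comm]
    exact Finset.sum_congr rfl fun i _ => by rw [Nat.add_comm b (b + c)]
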